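/- Deterministic Robbins–Siegmund lemma: let (X_t), (Y_t), (Z_t) be sequences of nonnegative real numbers satisfying X_t ≤ X_{t-1} - Y_{t-1} + Z_{t-1} for all t ≥ 1, and suppose the series ∑ Z_t converges. Then (X_t) converges and ∑ Y_t < ∞. -/
import Mathlib


theorem stmt_6 (X Y Z : ℕ → ℝ)
    (hX : ∀ t, 0 ≤ X t) (hY : ∀ t, 0 ≤ Y t) (hZ : ∀ t, 0 ≤ Z t)
    (hrec : ∀ t, 1 ≤ t → X t ≤ X (t - 1) - Y (t - 1) + Z (t - 1))
    (hZsum : Summable Z) :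
    (∃ L : ℝ, Filter.Tendsto X Filter.atTop (nhds L)) ∧ Summable Y := by
  have hrec' : ∀ t, X (t + 1) ≤ X t - Y t + Z t := by
    intro t
    simpa using hrec (t + 1) (Nat.le_add_left 1 t)
  -- key inequality by induction
  have key : ∀ n, X n + ∑ s ∈ Finset.range n, Y s ≤ X 0 + ∑ s ∈ Finset.range n, Z s := by
    intro n
    induction n with
    | zero => simp
    | succ n ih =>
      rw [Finset.sum_range_succ, Finset.sum_range_succ]
      have := hrec' n
      linarith
  have hYsum : Summable Y := by
    apply summable_of_sum_range_le hY (c := X 0 + ∑' s, Z s)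
    intro n
    have h1 := key n
    have h2 : ∑ s ∈ Finset.range n, Z s ≤ ∑' s, Z s :=
      Summable.sum_le_tsum _ (fun i _ => hZ i) hZsum
    have := hX n
    linarith
  refine ⟨?_, hYsum⟩
  -- W t = X t + tail of Z
  set W : ℕ → ℝ := fun t => X t + ∑' s, Z (s + t) with hW
  have htailsum : ∀ t, Summable (fun s => Z (s + t)) := fun t =>
    (summable_nat_add_iff t).2 hZsum
  have hWanti : ∀ t, W (t + 1) ≤ W t := by
    intro t
    have hsplit : ∑' s, Z (s + t) = Z t + ∑' s, Z (s + (t + 1)) := by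
      rw [Summable.tsum_eq_zero_add (htailsum t)]
      simp only [zero_add]
      exact congrArg _ (tsum_congr fun s => by ring_nf)
    have h1 := hrec' t
    have h2 := hY t
    simp only [hW, hsplit]
    linarith
  have hWmono : Antitone W := antitone_nat_of_succ_le hWanti
  have hWbdd : BddBelow (Set.range W) := by
    refine ⟨0, ?_⟩
    rintro x ⟨t, rfl⟩
    have : 0 ≤ ∑' s, Z (s + t) := tsum_nonneg fun s => hZ _
    have := hX t
    simp only [hW]
    linarith
  have hWconv : Filter.Tendsto W Filter.atTop (nhds (⨅ t, W t)) :=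
    tendsto_atTop_ciInf hWmono hWbdd
  have htail0 : Filter.Tendsto (fun t => ∑' s, Z (s + t)) Filter.atTop (nhds 0) := by
    exact tendsto_sum_nat_add Z
  refine ⟨⨅ t, W t, ?_⟩
  have : X = fun t => W t - ∑' s, Z (s + t) := by
    ext t; simp [hW]
  rw [this]
  simpa using hWconv.sub htail0
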